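/- arXiv:1605.03401 — 2 statements merged into one kernel-verified Lean document; each statement's English description precedes it below -/
import Mathlib

section
/- Let α ∈ (0,1), θ > -α, and let (Y_j)_{j≥1} be independent with Y_j ∼ Beta(1-α, θ + jα). Set M_n = ∏_{i=1}^n (1 - Y_i). Then for every γ > -(θ+α), E[M_n^γ] = [Γ(θ+γ+nα)/Γ(θ+nα)] · [Γ(n+θ/α)/Γ(n+(θ+γ)/α)] · [Γ(θ+1)Γ((θ+γ)/α+1)] / [Γ(θ+γ+1)Γ(θ/α+1)]. -/
set_option maxHeartbeats 1000000

open MeasureTheory ProbabilityTheory Filter Topology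

/-- The Beta(a,b) distribution on `ℝ`, supported on `(0,1)`, with density
`Γ(a+b)/(Γ(a)Γ(b)) x^{a-1}(1-x)^{b-1}`. -/
noncomputable def betaMeasure (a b : ℝ) : Measure ℝ :=
  (MeasureTheory.volume.restrict (Set.Ioo (0:ℝ) 1)).withDensity fun x =>
    ENNReal.ofReal (Real.Gamma (a + b) / (Real.Gamma a * Real.Gamma b) *
      x ^ (a - 1) * (1 - x) ^ (b - 1))

/-- `(Y j)_{j ≥ 1}` are independent with `Y j ∼ Beta(1-α, θ+jα)` (the stick-breaking
variables of the `PD(α,θ)` distribution). -/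
def IsStickBreaking {Ω : Type*} [MeasureSpace Ω] (α θ : ℝ) (Y : ℕ → Ω → ℝ) : Prop :=
  (∀ j, Measurable (Y j)) ∧
    iIndepFun Y ℙ ∧
      ∀ j : ℕ, 1 ≤ j → Measure.map (Y j) ℙ = _root_.betaMeasure (1 - α) (θ + j * α)

/-- `M n = ∏_{i=1}^n (1 - Y i)` (so `M 0 = 1`). -/
noncomputable def Mstick {Ω : Type*} (Y : ℕ → Ω → ℝ) (n : ℕ) (ω : Ω) : ℝ :=
  ∏ i ∈ Finset.Icc 1 n, (1 - Y i ω)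

section Aux

open Set
open scoped ENNReal NNReal

lemma beta_pointwise {a b x : ℝ} (h1 : 0 ≤ x) (h2 : x ≤ 1) :
    ((x ^ (a-1) * (1-x) ^ (b-1) : ℝ) : ℂ) = (x:ℂ) ^ ((a:ℂ) - 1) * (1 - (x:ℂ)) ^ ((b:ℂ) - 1) := by
  have h2' : (0:ℝ) ≤ 1 - x := by linarith
  rw [Complex.ofReal_mul, Complex.ofReal_cpow h1, Complex.ofReal_cpow h2']
  push_cast
  ring

lemma betaIntegrableOn {a b : ℝ} (ha : 0 < a) (hb : 0 < b) :
    IntegrableOn (fun x : ℝ => x ^ (a - 1) * (1 - x) ^ (b - 1)) (Set.Ioo 0 1) := by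
  have h := Complex.betaIntegral_convergent (u := (a:ℂ)) (v := (b:ℂ)) (by simpa using ha)
    (by simpa using hb)
  rw [intervalIntegrable_iff_integrableOn_Ioc_of_le zero_le_one] at h
  have h2 : IntegrableOn (fun x : ℝ => ((x ^ (a-1) * (1-x) ^ (b-1) : ℝ) : ℂ)) (Set.Ioc 0 1) := by
    refine h.congr_fun (fun x hx => ?_) measurableSet_Ioc
    exact (beta_pointwise hx.1.le hx.2).symm
  have h3 := h2.re
  have h4 : IntegrableOn (fun x : ℝ => x ^ (a-1) * (1-x) ^ (b-1)) (Set.Ioc 0 1) := by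
    simp at h3
    exact h3
  exact h4.mono_set Set.Ioo_subset_Ioc_self

lemma betaIntegral_real {a b : ℝ} (ha : 0 < a) (hb : 0 < b) :
    ∫ x in Set.Ioo (0:ℝ) 1, x ^ (a - 1) * (1 - x) ^ (b - 1)
      = Real.Gamma a * Real.Gamma b / Real.Gamma (a + b) := by
  have hG := Complex.Gamma_mul_Gamma_eq_betaIntegral (s := (a:ℂ)) (t := (b:ℂ))
    (by simpa using ha) (by simpa using hb)
  have hcongr : Complex.betaIntegral a b
      = ∫ x in (0:ℝ)..1, ((x ^ (a-1) * (1-x) ^ (b-1) : ℝ) : ℂ) := by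
    rw [Complex.betaIntegral]
    refine intervalIntegral.integral_congr fun x hx => ?_
    rw [Set.uIcc_of_le zero_le_one] at hx
    exact (beta_pointwise hx.1 hx.2).symm
  rw [hcongr, intervalIntegral.integral_ofReal] at hG
  have hreal : (∫ x in (0:ℝ)..1, x ^ (a-1) * (1-x) ^ (b-1))
      = ∫ x in Set.Ioo (0:ℝ) 1, x ^ (a - 1) * (1 - x) ^ (b - 1) := by
    rw [intervalIntegral.integral_of_le zero_le_one, ← integral_Ioc_eq_integral_Ioo]
  rw [hreal] at hG
  rw [show ((a:ℂ) + b) = ((a + b : ℝ) : ℂ) by push_cast; ring] at hG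
  rw [Complex.Gamma_ofReal, Complex.Gamma_ofReal, Complex.Gamma_ofReal] at hG
  have hG' : Real.Gamma a * Real.Gamma b
      = Real.Gamma (a + b) * ∫ x in Set.Ioo (0:ℝ) 1, x ^ (a - 1) * (1 - x) ^ (b - 1) := by
    exact_mod_cast hG
  have hΓ : Real.Gamma (a + b) ≠ 0 := (Real.Gamma_pos_of_pos (by linarith)).ne'
  field_simp
  linarith [hG']

lemma beta_density_meas (a b : ℝ) :
    Measurable fun x : ℝ => (Real.Gamma (a + b) / (Real.Gamma a * Real.Gamma b) *
      x ^ (a - 1) * (1 - x) ^ (b - 1)).toNNReal := by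
  apply Measurable.real_toNNReal
  exact ((measurable_const.mul (measurable_id.pow_const _)).mul
    ((measurable_const.sub measurable_id).pow_const _))

lemma beta_smul_eq {a b C : ℝ} (hC : 0 ≤ C) (γ : ℝ) : Set.EqOn
    (fun x : ℝ => (C * x ^ (a - 1) * (1 - x) ^ (b - 1)).toNNReal • (1 - x) ^ γ)
    (fun x : ℝ => C * (x ^ (a - 1) * (1 - x) ^ (b + γ - 1))) (Set.Ioo 0 1) := by
  intro x hx
  have hx1 : (0:ℝ) < x := hx.1
  have hx2 : (0:ℝ) < 1 - x := by linarith [hx.2]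
  have hnn : 0 ≤ C * x ^ (a - 1) * (1 - x) ^ (b - 1) :=
    mul_nonneg (mul_nonneg hC (Real.rpow_nonneg hx1.le _)) (Real.rpow_nonneg hx2.le _)
  simp only [NNReal.smul_def, Real.coe_toNNReal _ hnn, smul_eq_mul]
  rw [show b + γ - 1 = (b - 1) + γ by ring, Real.rpow_add hx2]
  ring

lemma betaMeasure_integrable_rpow {a b γ : ℝ} (ha : 0 < a) (hb : 0 < b) (hbγ : 0 < b + γ) :
    Integrable (fun x : ℝ => (1 - x) ^ γ) (_root_.betaMeasure a b) := by
  set C := Real.Gamma (a + b) / (Real.Gamma a * Real.Gamma b) with hCdef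
  have hC : 0 ≤ C := by
    apply div_nonneg (Real.Gamma_pos_of_pos (by linarith)).le
    exact (mul_pos (Real.Gamma_pos_of_pos ha) (Real.Gamma_pos_of_pos hb)).le
  rw [_root_.betaMeasure, show (fun x : ℝ => ENNReal.ofReal (C * x ^ (a - 1) * (1 - x) ^ (b - 1)))
      = fun x : ℝ => ((C * x ^ (a - 1) * (1 - x) ^ (b - 1)).toNNReal : ℝ≥0∞) from rfl,
    integrable_withDensity_iff_integrable_smul (beta_density_meas a b)]
  have hint : IntegrableOn (fun x : ℝ => C * (x ^ (a - 1) * (1 - x) ^ (b + γ - 1)))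
      (Set.Ioo 0 1) := (betaIntegrableOn ha hbγ).const_mul C
  exact hint.congr_fun (fun x hx => (beta_smul_eq hC γ hx).symm) measurableSet_Ioo

lemma betaMeasure_integral_rpow {a b γ : ℝ} (ha : 0 < a) (hb : 0 < b) (hbγ : 0 < b + γ) :
    ∫ x, (1 - x) ^ γ ∂(_root_.betaMeasure a b)
      = Real.Gamma (a + b) * Real.Gamma (b + γ) / (Real.Gamma b * Real.Gamma (a + b + γ)) := by
  set C := Real.Gamma (a + b) / (Real.Gamma a * Real.Gamma b) with hCdef
  have hC : 0 ≤ C := by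
    apply div_nonneg (Real.Gamma_pos_of_pos (by linarith)).le
    exact (mul_pos (Real.Gamma_pos_of_pos ha) (Real.Gamma_pos_of_pos hb)).le
  rw [_root_.betaMeasure, show (fun x : ℝ => ENNReal.ofReal (C * x ^ (a - 1) * (1 - x) ^ (b - 1)))
      = fun x : ℝ => ((C * x ^ (a - 1) * (1 - x) ^ (b - 1)).toNNReal : ℝ≥0∞) from rfl,
    integral_withDensity_eq_integral_smul (beta_density_meas a b)]
  rw [setIntegral_congr_fun measurableSet_Ioo (beta_smul_eq hC γ)]
  rw [integral_const_mul, betaIntegral_real ha hbγ, show a + (b + γ) = a + b + γ by ring]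
  have h1 : Real.Gamma a ≠ 0 := (Real.Gamma_pos_of_pos ha).ne'
  have h2 : Real.Gamma b ≠ 0 := (Real.Gamma_pos_of_pos hb).ne'
  have h3 : Real.Gamma (a + b + γ) ≠ 0 := (Real.Gamma_pos_of_pos (by linarith)).ne'
  field_simp [hCdef]
  rw [hCdef]
  field_simp

lemma indep_integral_prod {Ω : Type*} [MeasureSpace Ω] [IsProbabilityMeasure (ℙ : Measure Ω)]
    (g : ℕ → Ω → ℝ) (hmeas : ∀ i, Measurable (g i))
    (hindep : iIndepFun g ℙ)
    (s : Finset ℕ) (hint : ∀ i ∈ s, Integrable (g i) ℙ) :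
    Integrable (fun ω => ∏ i ∈ s, g i ω) ℙ ∧
      (∫ ω, ∏ i ∈ s, g i ω ∂ℙ) = ∏ i ∈ s, ∫ ω, g i ω ∂ℙ := by
  classical
  induction s using Finset.induction_on with
  | empty => simp
  | insert i s hi ih =>
    have hint' : ∀ j ∈ s, Integrable (g j) ℙ := fun j hj =>
      hint j (Finset.mem_insert_of_mem hj)
    have hinti : Integrable (g i) ℙ := hint i (Finset.mem_insert_self i s)
    have ih' := ih hint'
    have hIndep : IndepFun (∏ j ∈ s, g j) (g i) ℙ :=
      hindep.indepFun_finsetProd_of_notMem hmeas hi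
    have hprodfn : (∏ j ∈ s, g j) = fun ω => ∏ j ∈ s, g j ω := by
      funext ω; simp [Finset.prod_apply]
    rw [hprodfn] at hIndep
    have hIndep' := hIndep.symm
    have hint1 : Integrable (fun ω => g i ω * ∏ j ∈ s, g j ω) ℙ :=
      hIndep'.integrable_mul hinti ih'.1
    constructor
    · refine hint1.congr (Filter.Eventually.of_forall fun ω => ?_)
      simp only [Finset.prod_insert hi]
    · have := hIndep'.integral_fun_mul_eq_mul_integral hinti.1 ih'.1.1
      calc (∫ ω, ∏ j ∈ insert i s, g j ω ∂ℙ)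
          = ∫ ω, g i ω * ∏ j ∈ s, g j ω ∂ℙ := by
            congr 1; funext ω; rw [Finset.prod_insert hi]
        _ = (∫ ω, g i ω ∂ℙ) * ∫ ω, ∏ j ∈ s, g j ω ∂ℙ := this
        _ = ∏ j ∈ insert i s, ∫ ω, g j ω ∂ℙ := by rw [Finset.prod_insert hi, ih'.2]

lemma gamma_prod_formula (α θ γ : ℝ) (hα : α ∈ Set.Ioo (0:ℝ) 1) (hθ : -α < θ)
    (hγ : -(θ + α) < γ) (n : ℕ) (hn : 1 ≤ n) :
    (∏ j ∈ Finset.Icc 1 n, (Real.Gamma (1 - α + (θ + j * α)) * Real.Gamma (θ + j * α + γ) /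
        (Real.Gamma (θ + j * α) * Real.Gamma (1 - α + (θ + j * α) + γ))))
      = (Real.Gamma (θ + γ + n * α) / Real.Gamma (θ + n * α)) *
        (Real.Gamma (n + θ / α) / Real.Gamma (n + (θ + γ) / α)) *
        (Real.Gamma (θ + 1) * Real.Gamma ((θ + γ) / α + 1) /
          (Real.Gamma (θ + γ + 1) * Real.Gamma (θ / α + 1))) := by
  obtain ⟨hα0, hα1⟩ := hα
  have hθα : 0 < θ + α := by linarith
  have hθγα : 0 < θ + γ + α := by linarith
  have hθ1 : 0 < θ + 1 := by linarith
  have hθγ1 : 0 < θ + γ + 1 := by linarith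
  have hθdiv : 0 < θ / α + 1 := by
    rw [div_add' _ _ _ hα0.ne']
    exact div_pos (by linarith) hα0
  have hθγdiv : 0 < (θ + γ) / α + 1 := by
    rw [div_add' _ _ _ hα0.ne']
    exact div_pos (by linarith) hα0
  induction n, hn using Nat.le_induction with
  | base =>
    simp only [Finset.Icc_self, Finset.prod_singleton, Nat.cast_one, one_mul]
    rw [show (1:ℝ) - α + (θ + α) = θ + 1 by ring, show θ + 1 + γ = θ + γ + 1 by ring,
      show θ + α + γ = θ + γ + α by ring, show (1:ℝ) + θ / α = θ / α + 1 by ring,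
      show (1:ℝ) + (θ + γ) / α = (θ + γ) / α + 1 by ring]
    have h1 : Real.Gamma (θ + α) ≠ 0 := (Real.Gamma_pos_of_pos hθα).ne'
    have h2 : Real.Gamma (θ + γ + 1) ≠ 0 := (Real.Gamma_pos_of_pos hθγ1).ne'
    have h3 : Real.Gamma (θ / α + 1) ≠ 0 := (Real.Gamma_pos_of_pos hθdiv).ne'
    have h4 : Real.Gamma ((θ + γ) / α + 1) ≠ 0 := (Real.Gamma_pos_of_pos hθγdiv).ne'
    field_simp
  | succ n hn ih =>
    rw [Finset.prod_Icc_succ_top (by omega : 1 ≤ n + 1), ih]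
    have hn1 : (1:ℝ) ≤ n := by exact_mod_cast hn
    have hnα : (0:ℝ) < θ + n * α := by nlinarith
    have hnαγ : (0:ℝ) < θ + γ + n * α := by nlinarith
    have hnθdiv : (0:ℝ) < n + θ / α := by linarith
    have hnθγdiv : (0:ℝ) < n + (θ + γ) / α := by linarith
    push_cast
    rw [show (1:ℝ) - α + (θ + (n + 1) * α) = (θ + n * α) + 1 by ring,
      show θ + (n:ℝ) * α + 1 + γ = (θ + γ + n * α) + 1 by ring,
      show θ + ((n:ℝ) + 1) * α + γ = θ + γ + ((n:ℝ) + 1) * α by ring,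
      show (n:ℝ) + 1 + θ / α = (n + θ / α) + 1 by ring,
      show (n:ℝ) + 1 + (θ + γ) / α = (n + (θ + γ) / α) + 1 by ring,
      Real.Gamma_add_one hnα.ne', Real.Gamma_add_one hnαγ.ne',
      Real.Gamma_add_one hnθdiv.ne', Real.Gamma_add_one hnθγdiv.ne']
    have g1 : Real.Gamma (θ + (n:ℝ) * α) ≠ 0 := (Real.Gamma_pos_of_pos hnα).ne'
    have g2 : Real.Gamma (θ + γ + (n:ℝ) * α) ≠ 0 := (Real.Gamma_pos_of_pos hnαγ).ne'
    have g3 : Real.Gamma ((n:ℝ) + θ / α) ≠ 0 := (Real.Gamma_pos_of_pos hnθdiv).ne'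
    have g4 : Real.Gamma ((n:ℝ) + (θ + γ) / α) ≠ 0 := (Real.Gamma_pos_of_pos hnθγdiv).ne'
    have g5 : Real.Gamma (θ + 1) ≠ 0 := (Real.Gamma_pos_of_pos hθ1).ne'
    have g6 : Real.Gamma (θ + γ + 1) ≠ 0 := (Real.Gamma_pos_of_pos hθγ1).ne'
    have g7 : Real.Gamma (θ / α + 1) ≠ 0 := (Real.Gamma_pos_of_pos hθdiv).ne'
    have g8 : Real.Gamma ((θ + γ) / α + 1) ≠ 0 := (Real.Gamma_pos_of_pos hθγdiv).ne'
    have g9 : Real.Gamma (θ + γ + ((n:ℝ) + 1) * α) ≠ 0 := by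
      refine (Real.Gamma_pos_of_pos ?_).ne'
      nlinarith
    have g10 : Real.Gamma (θ + ((n:ℝ) + 1) * α) ≠ 0 := by
      refine (Real.Gamma_pos_of_pos ?_).ne'
      nlinarith
    set A := Real.Gamma (θ + (n:ℝ) * α) with hA
    set B := Real.Gamma (θ + γ + (n:ℝ) * α) with hB
    set Cg := Real.Gamma ((n:ℝ) + θ / α) with hCg
    set D := Real.Gamma ((n:ℝ) + (θ + γ) / α) with hD
    set E := Real.Gamma (θ + 1) with hE
    set F := Real.Gamma (θ + γ + 1) with hF
    set G := Real.Gamma (θ / α + 1) with hG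
    set H := Real.Gamma ((θ + γ) / α + 1) with hH
    set I := Real.Gamma (θ + ((n:ℝ) + 1) * α) with hI
    set J := Real.Gamma (θ + γ + ((n:ℝ) + 1) * α) with hJ
    have key : (θ + (n:ℝ) * α) / (θ + γ + (n:ℝ) * α)
        = ((n:ℝ) + θ / α) / ((n:ℝ) + (θ + γ) / α) := by
      rw [div_eq_div_iff hnαγ.ne' hnθγdiv.ne']
      field_simp
      ring
    have step1 : B / A * (Cg / D) * (E * H / (F * G)) *
          ((θ + (n:ℝ) * α) * A * J / (I * ((θ + γ + (n:ℝ) * α) * B)))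
        = (θ + (n:ℝ) * α) / (θ + γ + (n:ℝ) * α) * (Cg / D * (E * H / (F * G)) * (J / I)) := by
      field_simp
    have step2 : J / I * (((n:ℝ) + θ / α) * Cg / (((n:ℝ) + (θ + γ) / α) * D)) * (E * H / (F * G))
        = ((n:ℝ) + θ / α) / ((n:ℝ) + (θ + γ) / α) * (Cg / D * (E * H / (F * G)) * (J / I)) := by
      field_simp
    rw [step1, step2, key]

end Aux

/-- exact formula for `E[M_n^γ]`. -/
theorem stmt2 {Ω : Type*} [MeasureSpace Ω] [IsProbabilityMeasure (ℙ : Measure Ω)]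
    (α θ : ℝ) (hα : α ∈ Set.Ioo (0:ℝ) 1) (hθ : -α < θ)
    (Y : ℕ → Ω → ℝ) (hY : IsStickBreaking α θ Y)
    (γ : ℝ) (hγ : -(θ + α) < γ) (n : ℕ) (hn : 1 ≤ n) :
    ∫ ω, Mstick Y n ω ^ γ ∂ℙ =
      (Real.Gamma (θ + γ + n * α) / Real.Gamma (θ + n * α)) *
        (Real.Gamma (n + θ / α) / Real.Gamma (n + (θ + γ) / α)) *
        (Real.Gamma (θ + 1) * Real.Gamma ((θ + γ) / α + 1) /
          (Real.Gamma (θ + γ + 1) * Real.Gamma (θ / α + 1))) := by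
  obtain ⟨hmeas, hindep, hdist⟩ := hY
  obtain ⟨hα0, hα1⟩ := hα
  -- the transformed variables
  set g : ℕ → Ω → ℝ := fun j ω => (1 - Y j ω) ^ γ with hg
  have hφmeas : Measurable fun x : ℝ => (1 - x) ^ γ :=
    (measurable_const.sub measurable_id).pow_const _
  have hgmeas : ∀ j, Measurable (g j) := fun j => hφmeas.comp (hmeas j)
  have hgindep : iIndepFun g ℙ :=
    hindep.comp (fun _ x => (1 - x) ^ γ) (fun _ => hφmeas)
  -- positivity facts
  have hb : ∀ j : ℕ, 1 ≤ j → (0:ℝ) < θ + j * α := by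
    intro j hj
    have : (1:ℝ) ≤ j := by exact_mod_cast hj
    nlinarith
  have hbγ : ∀ j : ℕ, 1 ≤ j → (0:ℝ) < θ + j * α + γ := by
    intro j hj
    have : (1:ℝ) ≤ j := by exact_mod_cast hj
    nlinarith
  have ha : (0:ℝ) < 1 - α := by linarith
  -- a.e. each Y j lies in (0,1)
  have haein : ∀ j : ℕ, 1 ≤ j → ∀ᵐ ω ∂(ℙ : Measure Ω), Y j ω ∈ Set.Ioo (0:ℝ) 1 := by
    intro j hj
    have hmap : (Measure.map (Y j) ℙ) (Set.Ioo (0:ℝ) 1)ᶜ = 0 := by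
      rw [hdist j hj, _root_.betaMeasure, withDensity_apply _ measurableSet_Ioo.compl,
        Measure.restrict_restrict measurableSet_Ioo.compl]
      simp
    rw [Measure.map_apply (hmeas j) measurableSet_Ioo.compl] at hmap
    exact hmap
  have haeall : ∀ᵐ ω ∂(ℙ : Measure Ω), ∀ j ∈ Finset.Icc 1 n, Y j ω ∈ Set.Ioo (0:ℝ) 1 := by
    rw [MeasureTheory.ae_all_iff]
    intro j
    by_cases hj : j ∈ Finset.Icc 1 n
    · filter_upwards [haein j (Finset.mem_Icc.mp hj).1] with ω h _
      exact h
    · filter_upwards with ω h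
      exact absurd h hj
  -- rewrite the integrand a.e.
  have hcongr : (fun ω => Mstick Y n ω ^ γ) =ᵐ[(ℙ : Measure Ω)]
      fun ω => ∏ j ∈ Finset.Icc 1 n, g j ω := by
    filter_upwards [haeall] with ω hω
    rw [Mstick, ← Real.finset_prod_rpow _ _ (fun j hj => by
      have := hω j hj
      simp only [Set.mem_Ioo] at this
      linarith [this.2]) γ]
  rw [integral_congr_ae hcongr]
  -- integrability of each factor
  have hgint : ∀ j ∈ Finset.Icc 1 n, Integrable (g j) ℙ := by
    intro j hj
    have hj1 := (Finset.mem_Icc.mp hj).1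
    have hbj := hb j hj1
    have hbγj : 0 < (θ + j * α) + γ := hbγ j hj1
    have hInt : Integrable (fun x : ℝ => (1 - x) ^ γ) (Measure.map (Y j) ℙ) := by
      rw [hdist j hj1]
      exact betaMeasure_integrable_rpow ha hbj hbγj
    rw [integrable_map_measure hφmeas.aestronglyMeasurable (hmeas j).aemeasurable] at hInt
    exact hInt
  -- expectation of the product
  obtain ⟨-, hprod⟩ := indep_integral_prod g hgmeas hgindep (Finset.Icc 1 n) hgint
  rw [hprod]
  -- compute each expectation
  have hval : ∀ j ∈ Finset.Icc 1 n, (∫ ω, g j ω ∂ℙ)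
      = Real.Gamma (1 - α + (θ + j * α)) * Real.Gamma (θ + j * α + γ) /
        (Real.Gamma (θ + j * α) * Real.Gamma (1 - α + (θ + j * α) + γ)) := by
    intro j hj
    have hj1 := (Finset.mem_Icc.mp hj).1
    have hbj := hb j hj1
    have hbγj : 0 < (θ + j * α) + γ := hbγ j hj1
    have := integral_map (μ := (ℙ : Measure Ω)) (hmeas j).aemeasurable
      (f := fun x : ℝ => (1 - x) ^ γ) hφmeas.aestronglyMeasurable
    rw [hdist j hj1] at this
    rw [hg]
    simp only []
    rw [← this, betaMeasure_integral_rpow ha hbj hbγj]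
  rw [Finset.prod_congr rfl hval]
  exact gamma_prod_formula α θ γ ⟨hα0, hα1⟩ hθ hγ n hn
end

section
/- Let α ∈ (0,1), θ > -α. If Y_j ∼ Beta(1-α, θ+jα) then E[(jY_j)^α] = 1/(α^α Γ(1-α)) + O(1/j) and Var((jY_j)^α) = (Γ(1+α)Γ(1-α) - 1)/(α^{2α} Γ(1-α)^2) + O(1/j) as j → ∞. -/
open MeasureTheory ProbabilityTheory Filter Topology

section aux
open Real Set
open scoped NNReal ENNReal


lemma realBetaIntegral {u v : ℝ} (hu : 0 < u) (hv : 0 < v) :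
    ∫ x in Set.Ioo (0:ℝ) 1, x ^ (u-1) * (1-x) ^ (v-1) =
      Real.Gamma u * Real.Gamma v / Real.Gamma (u+v) := by
  have hc : Complex.Gamma u * Complex.Gamma v
      = Complex.Gamma (u+v) * Complex.betaIntegral u v :=
    Complex.Gamma_mul_Gamma_eq_betaIntegral (by simpa using hu) (by simpa using hv)
  have hB : Complex.betaIntegral u v
      = ((∫ x in (0:ℝ)..1, x ^ (u-1) * (1-x) ^ (v-1) : ℝ) : ℂ) := by
    rw [Complex.betaIntegral, ← intervalIntegral.integral_ofReal]
    refine intervalIntegral.integral_congr fun x hx => ?_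
    rw [Set.uIcc_of_le (by norm_num : (0:ℝ) ≤ 1)] at hx
    push_cast
    rw [Complex.ofReal_cpow hx.1 (u-1), Complex.ofReal_cpow (by linarith [hx.2]) (v-1)]
    push_cast
    ring
  have h1 : (∫ x in (0:ℝ)..1, x ^ (u-1) * (1-x) ^ (v-1) : ℝ)
      = ∫ x in Set.Ioo (0:ℝ) 1, x ^ (u-1) * (1-x) ^ (v-1) := by
    rw [intervalIntegral.integral_of_le (by norm_num : (0:ℝ) ≤ 1),
      integral_Ioc_eq_integral_Ioo]
  have hGuv : Complex.Gamma (u+v) ≠ 0 := by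
    rw [show ((u:ℂ)+v) = ((u+v:ℝ):ℂ) by push_cast; ring, Complex.Gamma_ofReal]
    exact_mod_cast (Real.Gamma_pos_of_pos (by linarith)).ne'
  have := hc
  rw [hB, h1] at this
  have h2 : (Real.Gamma u * Real.Gamma v : ℂ)
      = (Real.Gamma (u+v) : ℂ) * (∫ x in Set.Ioo (0:ℝ) 1, x ^ (u-1) * (1-x) ^ (v-1) : ℝ) := by
    rw [← Complex.Gamma_ofReal, ← Complex.Gamma_ofReal, ← Complex.Gamma_ofReal]
    push_cast
    exact this
  have h3 : Real.Gamma u * Real.Gamma v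
      = Real.Gamma (u+v) * ∫ x in Set.Ioo (0:ℝ) 1, x ^ (u-1) * (1-x) ^ (v-1) := by
    exact_mod_cast h2
  have hG : Real.Gamma (u+v) ≠ 0 := (Real.Gamma_pos_of_pos (by linarith)).ne'
  field_simp [h3]
  rw [h3]; ring

lemma betaMeasure_compl_Ioo (a b : ℝ) : _root_.betaMeasure a b ((Set.Ioo (0:ℝ) 1)ᶜ) = 0 := by
  refine withDensity_absolutelyContinuous _ _ ?_
  rw [Measure.restrict_apply (measurableSet_Ioo.compl)]
  simp

lemma betaMeasure_integral (a b : ℝ) (ha : 0 < a) (hb : 0 < b) (g : ℝ → ℝ) :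
    ∫ x, g x ∂_root_.betaMeasure a b = ∫ x in Set.Ioo (0:ℝ) 1,
      (Real.Gamma (a + b) / (Real.Gamma a * Real.Gamma b) * x ^ (a - 1) * (1 - x) ^ (b - 1)) * g x := by
  have hd : Measurable (fun x : ℝ => Real.Gamma (a + b) / (Real.Gamma a * Real.Gamma b) *
      x ^ (a - 1) * (1 - x) ^ (b - 1)) := by fun_prop
  rw [_root_.betaMeasure]
  rw [show (fun x : ℝ => ENNReal.ofReal (Real.Gamma (a + b) / (Real.Gamma a * Real.Gamma b) *
      x ^ (a - 1) * (1 - x) ^ (b - 1))) = fun x : ℝ => ((Real.toNNReal (Real.Gamma (a + b) / (Real.Gamma a * Real.Gamma b) *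
      x ^ (a - 1) * (1 - x) ^ (b - 1)) : ℝ≥0) : ℝ≥0∞) from rfl]
  rw [integral_withDensity_eq_integral_smul (hd.real_toNNReal) g]
  refine setIntegral_congr_fun measurableSet_Ioo fun x hx => ?_
  have hC : 0 ≤ Real.Gamma (a + b) / (Real.Gamma a * Real.Gamma b) := by
    have := Real.Gamma_pos_of_pos ha
    have := Real.Gamma_pos_of_pos hb
    have := Real.Gamma_pos_of_pos (by linarith : 0 < a + b)
    positivity
  have h0 : 0 ≤ Real.Gamma (a + b) / (Real.Gamma a * Real.Gamma b) *
      x ^ (a - 1) * (1 - x) ^ (b - 1) := by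
    have h1 : (0:ℝ) ≤ x ^ (a-1) := Real.rpow_nonneg hx.1.le _
    have h2 : (0:ℝ) ≤ (1-x) ^ (b-1) := Real.rpow_nonneg (by linarith [hx.2]) _
    positivity
  simp [NNReal.smul_def, Real.coe_toNNReal _ h0]

lemma betaMeasure_rpow {a b : ℝ} (ha : 0 < a) (hb : 0 < b) (r : ℝ) (hr : 0 ≤ r) :
    ∫ x, x ^ r ∂_root_.betaMeasure a b =
      Real.Gamma (a+r) * Real.Gamma (a+b) / (Real.Gamma a * Real.Gamma (a+b+r)) := by
  rw [betaMeasure_integral a b ha hb]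
  have : ∫ x in Set.Ioo (0:ℝ) 1,
      (Real.Gamma (a + b) / (Real.Gamma a * Real.Gamma b) * x ^ (a - 1) * (1 - x) ^ (b - 1)) * x ^ r
      = ∫ x in Set.Ioo (0:ℝ) 1,
      Real.Gamma (a + b) / (Real.Gamma a * Real.Gamma b) * (x ^ (a + r - 1) * (1 - x) ^ (b - 1)) := by
    refine setIntegral_congr_fun measurableSet_Ioo fun x hx => ?_
    rw [show (a + r - 1) = (a-1) + r by ring, Real.rpow_add hx.1]
    ring
  rw [this, integral_const_mul, realBetaIntegral (by linarith : (0:ℝ) < a + r) hb]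
  have g1 := (Real.Gamma_pos_of_pos ha).ne'
  have g2 := (Real.Gamma_pos_of_pos hb).ne'
  have g3 := (Real.Gamma_pos_of_pos (by linarith : (0:ℝ) < a+b)).ne'
  have g4 := (Real.Gamma_pos_of_pos (by linarith : (0:ℝ) < a+b+r)).ne'
  field_simp
  ring


-- interpolation inequality from log-convexity of Gamma
lemma gamma_interp {x y t : ℝ} (hx : 0 < x) (hy : 0 < y) (ht0 : 0 ≤ t) (ht1 : t ≤ 1) :
    Real.Gamma ((1-t) * x + t * y) ≤ Real.Gamma x ^ (1-t) * Real.Gamma y ^ t := by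
  have hcvx := Real.convexOn_log_Gamma
  have h := hcvx.2 (Set.mem_Ioi.2 hx) (Set.mem_Ioi.2 hy) (by linarith : (0:ℝ) ≤ 1 - t) ht0
      (by ring : (1 - t) + t = 1)
  simp only [Function.comp_apply, smul_eq_mul] at h
  have hz : 0 < (1-t) * x + t * y := by
    rcases lt_or_ge 0 t with h'|h'
    · nlinarith [mul_pos h' hy, mul_nonneg (by linarith : (0:ℝ) ≤ 1-t) hx.le]
    · have ht : t = 0 := le_antisymm h' ht0
      rw [ht]; ring_nf; linarith
  have gx := Real.Gamma_pos_of_pos hx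
  have gy := Real.Gamma_pos_of_pos hy
  have gz := Real.Gamma_pos_of_pos hz
  calc Real.Gamma ((1-t) * x + t * y)
      = Real.exp (Real.log (Real.Gamma ((1-t) * x + t * y))) := (Real.exp_log gz).symm
    _ ≤ Real.exp ((1-t) * Real.log (Real.Gamma x) + t * Real.log (Real.Gamma y)) :=
        Real.exp_le_exp.2 h
    _ = Real.Gamma x ^ (1-t) * Real.Gamma y ^ t := by
        rw [Real.exp_add, ← Real.exp_log gx, ← Real.exp_log gy, ← Real.exp_mul, ← Real.exp_mul,
          ← Real.rpow_def_of_pos gx, ← Real.rpow_def_of_pos gy]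
        rw [Real.exp_log gx, Real.exp_log gy]
        rw [Real.rpow_def_of_pos gx, Real.rpow_def_of_pos gy]
        ring_nf

-- upper bound: Γ(x+s) ≤ Γ(x) x^s for s ∈ [0,1]
lemma gamma_add_le {x s : ℝ} (hx : 0 < x) (hs0 : 0 ≤ s) (hs1 : s ≤ 1) :
    Real.Gamma (x + s) ≤ Real.Gamma x * x ^ s := by
  have h := gamma_interp hx (by linarith : (0:ℝ) < x + 1) hs0 hs1
  rw [show (1-s) * x + s * (x+1) = x + s by ring] at h
  rw [Real.Gamma_add_one hx.ne'] at h
  have gx := Real.Gamma_pos_of_pos hx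
  calc Real.Gamma (x+s) ≤ Real.Gamma x ^ (1-s) * (x * Real.Gamma x) ^ s := h
    _ = Real.Gamma x * x ^ s := by
        have hxx : Real.Gamma x ^ (1-s) * Real.Gamma x ^ s = Real.Gamma x := by
          rw [← Real.rpow_add gx]; norm_num
        rw [Real.mul_rpow hx.le gx.le,
          show Real.Gamma x ^ (1-s) * (x ^ s * Real.Gamma x ^ s)
            = (Real.Gamma x ^ (1-s) * Real.Gamma x ^ s) * x ^ s by ring, hxx]

-- lower bound: Γ(x+s) ≥ x Γ(x) (x+s)^(s-1)
lemma gamma_add_ge {x s : ℝ} (hx : 0 < x) (hs0 : 0 ≤ s) (hs1 : s ≤ 1) :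
    x * Real.Gamma x * (x + s) ^ (s - 1) ≤ Real.Gamma (x + s) := by
  have h := gamma_interp (by linarith : (0:ℝ) < x + s) (by linarith : (0:ℝ) < x + s + 1)
      (by linarith : (0:ℝ) ≤ 1 - s) (by linarith : (1:ℝ) - s ≤ 1)
  rw [show (1-(1-s)) * (x+s) + (1-s) * (x+s+1) = x + 1 by ring] at h
  rw [Real.Gamma_add_one hx.ne', Real.Gamma_add_one (by positivity : (x+s) ≠ 0)] at h
  have gxs := Real.Gamma_pos_of_pos (by linarith : (0:ℝ) < x + s)
  have hxs : (0:ℝ) < x + s := by linarith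
  -- h : x * Γ x ≤ Γ(x+s)^(1-(1-s)) * ((x+s) Γ(x+s))^(1-s)
  have h2 : x * Real.Gamma x ≤ Real.Gamma (x+s) * (x+s) ^ (1-s) := by
    calc x * Real.Gamma x ≤ Real.Gamma (x+s) ^ (1-(1-s)) * ((x+s) * Real.Gamma (x+s)) ^ (1-s) := h
      _ = Real.Gamma (x+s) * (x+s) ^ (1-s) := by
          rw [Real.mul_rpow hxs.le gxs.le, show (1-(1-s)) = s by ring,
            show Real.Gamma (x+s) ^ s * ((x+s) ^ (1-s) * Real.Gamma (x+s) ^ (1-s))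
              = (Real.Gamma (x+s) ^ s * Real.Gamma (x+s) ^ (1-s)) * (x+s) ^ (1-s) by ring,
            ← Real.rpow_add gxs]
          norm_num
  have hp : (0:ℝ) < (x+s) ^ (1-s) := Real.rpow_pos_of_pos hxs _
  rw [show s - 1 = -(1-s) by ring, Real.rpow_neg hxs.le]
  rw [mul_inv_le_iff₀ hp]
  linarith

-- ratio bounds
lemma gamma_ratio_bounds {x s : ℝ} (hx : 0 < x) (hs0 : 0 < s) (hs1 : s ≤ 1) :
    1 ≤ x ^ s * Real.Gamma x / Real.Gamma (x + s) ∧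
    x ^ s * Real.Gamma x / Real.Gamma (x + s) ≤ 1 + s / x := by
  have gx := Real.Gamma_pos_of_pos hx
  have gxs := Real.Gamma_pos_of_pos (by linarith : (0:ℝ) < x + s)
  have hxs : (0:ℝ) < x + s := by linarith
  constructor
  · rw [le_div_iff₀ gxs, one_mul]
    linarith [gamma_add_le hx hs0.le hs1]
  · have h := gamma_add_ge hx hs0.le hs1
    have h2 : x ^ s * Real.Gamma x / Real.Gamma (x+s) ≤ ((x+s)/x) ^ (1 - s) := by
      rw [div_le_iff₀ gxs]
      calc x ^ s * Real.Gamma x = (x * Real.Gamma x * (x+s) ^ (s-1)) * (((x+s)/x) ^ (1-s)) := by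
            rw [Real.div_rpow hxs.le hx.le, show (s-1 : ℝ) = -(1-s) by ring,
              Real.rpow_neg hxs.le]
            have hne : ((x+s) ^ (1-s)) ≠ 0 := (Real.rpow_pos_of_pos hxs _).ne'
            have hxne : (x ^ (1-s)) ≠ 0 := (Real.rpow_pos_of_pos hx _).ne'
            have hxx : x ^ s * x ^ (1-s) = x := by rw [← Real.rpow_add hx]; norm_num
            field_simp
            linear_combination hxx
        _ ≤ Real.Gamma (x+s) * ((x+s)/x) ^ (1-s) := by
            have : (0:ℝ) ≤ ((x+s)/x) ^ (1-s) := (Real.rpow_pos_of_pos (by positivity) _).le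
            exact mul_le_mul_of_nonneg_right h this
        _ = ((x+s)/x) ^ (1-s) * Real.Gamma (x+s) := mul_comm _ _
    have h3 : ((x+s)/x) ^ (1-s) ≤ (x+s)/x := by
      nth_rewrite 2 [show (x+s)/x = ((x+s)/x) ^ (1:ℝ) from (Real.rpow_one _).symm]
      apply Real.rpow_le_rpow_of_exponent_le
      · rw [le_div_iff₀ hx]; linarith
      · linarith
    have : (x+s)/x = 1 + s/x := by field_simp
    linarith

lemma rpow_abs_sub_one {t a : ℝ} (ht : 0 < t) (h0 : 0 ≤ a) (h1 : a ≤ 1) :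
    |t ^ a - 1| ≤ |t - 1| := by
  rcases le_total t 1 with h|h
  · have l1 : t ^ (1:ℝ) ≤ t ^ a := Real.rpow_le_rpow_of_exponent_ge ht h h1
    rw [Real.rpow_one] at l1
    have l2 : t ^ a ≤ 1 := Real.rpow_le_one ht.le h h0
    rw [abs_of_nonpos (by linarith), abs_of_nonpos (by linarith)]
    linarith
  · have l1 : t ^ a ≤ t ^ (1:ℝ) := Real.rpow_le_rpow_of_exponent_le h (by linarith)
    rw [Real.rpow_one] at l1
    have l2 : 1 ≤ t ^ a := Real.one_le_rpow h h0
    rw [abs_of_nonneg (by linarith), abs_of_nonneg (by linarith)]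
    linarith

lemma gamma_ratio2_bounds {c a : ℝ} (hc : 0 < c) (ha : 0 < a) (ha1 : a ≤ 1) :
    1 - a/c ≤ c ^ (2*a) * Real.Gamma c / Real.Gamma (c + 2*a) ∧
    c ^ (2*a) * Real.Gamma c / Real.Gamma (c + 2*a) ≤ (1 + a/c)^2 := by
  have hca : (0:ℝ) < c + a := by linarith
  have g1 := gamma_ratio_bounds hc ha ha1
  have g1' := gamma_ratio_bounds hca ha ha1
  rw [show c + a + a = c + 2*a by ring] at g1'
  have gc := Real.Gamma_pos_of_pos hc
  have gca := Real.Gamma_pos_of_pos hca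
  have gc2a := Real.Gamma_pos_of_pos (by linarith : (0:ℝ) < c + 2*a)
  set t : ℝ := (c/(c+a)) ^ a with htdef
  have hcca : (0:ℝ) < c/(c+a) := by positivity
  have hcca1 : c/(c+a) ≤ 1 := by rw [div_le_one hca]; linarith
  have ht1 : t ≤ 1 := Real.rpow_le_one hcca.le hcca1 ha.le
  have ht0 : c/(c+a) ≤ t := by
    have := Real.rpow_le_rpow_of_exponent_ge hcca hcca1 ha1
    rwa [Real.rpow_one] at this
  have htpos : 0 < t := lt_of_lt_of_le hcca ht0
  have key : c ^ (2*a) * Real.Gamma c / Real.Gamma (c + 2*a)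
      = (c ^ a * Real.Gamma c / Real.Gamma (c + a)) * t *
        ((c+a) ^ a * Real.Gamma (c+a) / Real.Gamma (c + 2*a)) := by
    rw [htdef, Real.div_rpow hc.le hca.le, show (2*a) = a + a by ring, Real.rpow_add hc]
    have h1 : ((c+a) ^ a) ≠ 0 := (Real.rpow_pos_of_pos hca _).ne'
    field_simp
  have hg1l := g1.1; have hg1u := g1.2
  have hg1'l := g1'.1; have hg1'u := g1'.2
  have haac : a/(c+a) ≤ a/c := by
    apply div_le_div_of_nonneg_left ha.le hc; linarith
  have hccalb : 1 - a/c ≤ c/(c+a) := by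
    have : c/(c+a) = 1 - a/(c+a) := by field_simp; ring
    rw [this]; linarith
  set A := c ^ a * Real.Gamma c / Real.Gamma (c + a) with hA
  set B := (c+a) ^ a * Real.Gamma (c+a) / Real.Gamma (c + 2*a) with hB
  have hApos : 0 < A := lt_of_lt_of_le one_pos hg1l
  have hBpos : 0 < B := lt_of_lt_of_le one_pos hg1'l
  constructor
  · rw [key]
    have l1 : t ≤ A * t := by nlinarith
    have l2 : A * t ≤ A * t * B := by nlinarith
    linarith
  · rw [key]
    have hq : (0:ℝ) ≤ a/c := by positivity
    have u1 : A * t ≤ A := by nlinarith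
    have u2 : A * t * B ≤ A * B := mul_le_mul_of_nonneg_right u1 hBpos.le
    have u3 : A * B ≤ (1 + a/c) * (1 + a/c) :=
      mul_le_mul hg1u (hg1'u.trans (by linarith)) hBpos.le (by linarith)
    nlinarith

variable {Ω : Type*} [MeasureSpace Ω] [IsProbabilityMeasure (ℙ : Measure Ω)]
  {Y : Ω → ℝ} {a b : ℝ}

lemma ae_mem_Ioo (hm : Measurable Y) (hmap : Measure.map Y ℙ = _root_.betaMeasure a b) :
    ∀ᵐ ω ∂(ℙ : Measure Ω), Y ω ∈ Set.Ioo (0:ℝ) 1 := by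
  have h0 : (ℙ : Measure Ω) (Y ⁻¹' (Set.Ioo (0:ℝ) 1)ᶜ) = 0 := by
    rw [← Measure.map_apply hm measurableSet_Ioo.compl, hmap]
    exact betaMeasure_compl_Ioo a b
  rw [ae_iff]
  convert h0 using 2; rfl

lemma moment_eq (hm : Measurable Y) (ha : 0 < a) (hb : 0 < b)
    (hmap : Measure.map Y ℙ = _root_.betaMeasure a b) {k s : ℝ} (hk : 0 < k) (hs : 0 ≤ s) :
    ∫ ω, (k * Y ω) ^ s ∂(ℙ : Measure Ω) =
      k ^ s * (Real.Gamma (a+s) * Real.Gamma (a+b) / (Real.Gamma a * Real.Gamma (a+b+s))) := by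
  have hmeas : AEStronglyMeasurable (fun x : ℝ => (k * x) ^ s) (Measure.map Y ℙ) := by
    apply Measurable.aestronglyMeasurable; fun_prop
  have h1 : ∫ ω, (k * Y ω) ^ s ∂(ℙ : Measure Ω) = ∫ x, (k * x) ^ s ∂(_root_.betaMeasure a b) := by
    rw [← hmap, integral_map hm.aemeasurable hmeas]
  have hae : ∀ᵐ x ∂(_root_.betaMeasure a b), x ∈ Set.Ioo (0:ℝ) 1 := by
    rw [ae_iff]
    convert betaMeasure_compl_Ioo a b using 2; rfl
  have h2 : ∫ x, (k * x) ^ s ∂(_root_.betaMeasure a b) = ∫ x, k ^ s * x ^ s ∂(_root_.betaMeasure a b) := by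
    refine integral_congr_ae (hae.mono fun x hx => ?_)
    simp only []
    rw [Real.mul_rpow hk.le hx.1.le]
  rw [h1, h2, integral_const_mul, betaMeasure_rpow ha hb s hs]

lemma memLp_two (hm : Measurable Y) (hmap : Measure.map Y ℙ = _root_.betaMeasure a b)
    {k s : ℝ} (hk : 0 < k) (hs : 0 ≤ s) (hk1 : 1 ≤ k) :
    MemLp (fun ω => (k * Y ω) ^ s) 2 (ℙ : Measure Ω) := by
  refine MemLp.of_bound (by apply Measurable.aestronglyMeasurable; fun_prop) (k ^ s) ?_
  refine (ae_mem_Ioo hm hmap).mono fun ω hω => ?_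
  rw [Real.norm_eq_abs, abs_of_nonneg (Real.rpow_nonneg (by nlinarith [hω.1]) _)]
  apply Real.rpow_le_rpow (by nlinarith [hω.1]) _ hs
  nlinarith [hω.2]

end aux


lemma rpow_two_eq {x : ℝ} (hx : 0 ≤ x) (y : ℝ) : x ^ (2*y) = (x ^ y)^2 := by
  rw [mul_comm, Real.rpow_mul hx, ← Real.rpow_natCast (x^y) 2]
  norm_num

lemma core1 {r g d e e' : ℝ} (hr : |r - 1| ≤ d) (hg1 : 1 ≤ g) (hgu : g ≤ 1 + e)
    (he : 0 ≤ e) (hee : e ≤ e') (hd : 0 ≤ d) : |r*g - 1| ≤ d*(1+e') + e := by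
  have hr' := abs_le.1 hr
  have hgpos : (0:ℝ) < g := lt_of_lt_of_le one_pos hg1
  rw [abs_le]
  constructor
  · nlinarith [mul_le_mul_of_nonneg_right hr'.1 hgpos.le]
  · nlinarith [mul_le_mul_of_nonneg_right hr'.2 hgpos.le]

lemma core2 {r g2 d d' e e' : ℝ} (hr : |r - 1| ≤ d) (hrpos : 0 < r)
    (hg2l : 1 - e ≤ g2) (hg2u : g2 ≤ (1+e)^2) (hg2pos : 0 < g2)
    (he : 0 ≤ e) (hee : e ≤ e') (hd : 0 ≤ d) (hdd : d ≤ d') :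
    |r^2*g2 - 1| ≤ d*(2+d')*(1+e')^2 + (2*e + e*e') := by
  have hr' := abs_le.1 hr
  have h1 : |r^2 - 1| ≤ d*(2+d') := by
    have heq : r^2 - 1 = (r-1)*(r+1) := by ring
    rw [heq, abs_mul, abs_of_pos (by linarith : (0:ℝ) < r + 1)]
    have : r + 1 ≤ 2 + d' := by linarith
    exact mul_le_mul hr this (by linarith) (by linarith)
  have hg2e : |g2 - 1| ≤ 2*e + e*e' := by
    rw [abs_le]
    constructor
    · nlinarith
    · nlinarith
  have hg2ub : g2 ≤ (1+e')^2 := by nlinarith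
  have hsplit : |r^2*g2 - 1| ≤ |r^2-1| * g2 + |g2-1| := by
    have heq : r^2*g2 - 1 = (r^2-1)*g2 + (g2-1) := by ring
    rw [heq]
    calc |(r^2-1)*g2 + (g2-1)| ≤ |(r^2-1)*g2| + |g2-1| := abs_add_le _ _
      _ = |r^2-1| * g2 + |g2-1| := by rw [abs_mul, abs_of_pos hg2pos]
  have h3 : |r^2-1| * g2 ≤ d*(2+d')*(1+e')^2 :=
    mul_le_mul h1 hg2ub hg2pos.le (mul_nonneg hd (by linarith))
  linarith

set_option maxHeartbeats 1600000 in
theorem stmt6 {Ω : Type*} [MeasureSpace Ω] [IsProbabilityMeasure (ℙ : Measure Ω)]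
    (α θ : ℝ) (hα : α ∈ Set.Ioo (0:ℝ) 1) (hθ : -α < θ)
    (Y : ℕ → Ω → ℝ) (hY : IsStickBreaking α θ Y) :
    ∃ C : ℝ, ∀ j : ℕ, 1 ≤ j →
      |(∫ ω, ((j : ℝ) * Y j ω) ^ α ∂ℙ) - 1 / (α ^ α * Real.Gamma (1 - α))| ≤ C / j ∧
      |variance (fun ω => ((j : ℝ) * Y j ω) ^ α) ℙ -
          (Real.Gamma (1 + α) * Real.Gamma (1 - α) - 1) /
            (α ^ (2 * α) * Real.Gamma (1 - α) ^ 2)| ≤ C / j := by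
  obtain ⟨hα0, hα1⟩ := hα
  obtain ⟨hmeas, -, hlaw⟩ := hY
  set G : ℝ := Real.Gamma (1 - α) with hGdef
  have hG : 0 < G := Real.Gamma_pos_of_pos (by linarith)
  set P : ℝ := α ^ α with hPdef
  have hP : 0 < P := Real.rpow_pos_of_pos hα0 _
  set P2 : ℝ := α ^ (2*α) with hP2def
  have hP2 : 0 < P2 := Real.rpow_pos_of_pos hα0 _
  have hP2sq : P2 = P^2 := rpow_two_eq hα0.le α
  set κ : ℝ := min α (θ+1) with hκdef
  have hκ : 0 < κ := lt_min hα0 (by linarith)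
  set β : ℝ := 1 + θ - α with hβdef
  set A : ℝ := 1 / (P * G) with hAdef
  have hA : 0 < A := by positivity
  set B : ℝ := Real.Gamma (1+α) / (P2 * G) with hBdef
  have hGam1α : 0 < Real.Gamma (1+α) := Real.Gamma_pos_of_pos (by linarith)
  set K0 : ℝ := |β| * (1+α/κ) + α with hK0def
  have hK0 : 0 ≤ K0 := by positivity
  set C1 : ℝ := K0/(κ*(P*G)) with hC1def
  have hC1 : 0 ≤ C1 := by positivity
  set K3 : ℝ := (|β| * (2 + |β|/κ))*(1+α/κ)^2 + (2*α + α*(α/κ)) with hK3def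
  have hK3 : 0 ≤ K3 := by positivity
  set C2 : ℝ := Real.Gamma (1+α)/(P2*G) * K3/κ with hC2def
  have hC2 : 0 ≤ C2 := by positivity
  set C3 : ℝ := C1*(2*A + C1) with hC3def
  have hC3 : 0 ≤ C3 := by positivity
  refine ⟨max C1 (C2 + C3), fun j hj => ?_⟩
  have hj1 : (1:ℝ) ≤ (j:ℝ) := by exact_mod_cast hj
  have hjpos : (0:ℝ) < j := by linarith only [hj1]
  have ha : (0:ℝ) < 1 - α := by linarith only [hα1]
  have hjα : α ≤ (j:ℝ)*α := le_mul_of_one_le_left hα0.le hj1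
  have hb : (0:ℝ) < θ + j*α := by linarith only [hθ, hjα]
  set c : ℝ := 1 - α + (θ + j*α) with hcdef
  have hc : 0 < c := add_pos ha hb
  have hcβ : c = (j:ℝ)*α + β := by rw [hcdef, hβdef]; ring
  have hκj : κ * j ≤ c := by
    have k1 : κ ≤ α := min_le_left _ _
    have k2 : κ ≤ θ + 1 := min_le_right _ _
    rcases le_or_gt 0 β with hb0|hb0
    · have := mul_le_mul_of_nonneg_right k1 hjpos.le
      linarith only [this, hb0, hcβ, mul_comm κ (j:ℝ), mul_comm α (j:ℝ)]
    · have h1 := mul_le_mul_of_nonneg_right k2 hjpos.le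
      have h2 : β*(j:ℝ) ≤ β*1 := mul_le_mul_of_nonpos_left hj1 hb0.le
      have h3 : (θ+1)*(j:ℝ) = α*(j:ℝ) + β*(j:ℝ) := by rw [hβdef]; ring
      have h4 : c = α*(j:ℝ) + β := by rw [hcβ]; ring
      linarith only [h1, h2, h3, h4]
  have hκc : κ ≤ c := le_trans (le_mul_of_one_le_right hκ.le hj1) hκj
  have hmap := hlaw j hj
  -- moments
  have hE : ∫ ω, ((j : ℝ) * Y j ω) ^ α ∂ℙ
      = (j:ℝ) ^ α * (Real.Gamma c / (G * Real.Gamma (c + α))) := by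
    rw [moment_eq (hmeas j) ha hb hmap hjpos hα0.le]
    rw [show (1 - α + α : ℝ) = 1 by ring, Real.Gamma_one, ← hcdef, ← hGdef]
    ring_nf
  have hE2 : ∫ ω, ((j : ℝ) * Y j ω) ^ (2*α) ∂ℙ
      = (j:ℝ) ^ (2*α) * (Real.Gamma (1+α) * Real.Gamma c / (G * Real.Gamma (c + 2*α))) := by
    rw [moment_eq (hmeas j) ha hb hmap hjpos (by linarith only [hα0] : (0:ℝ) ≤ 2*α)]
    rw [show (1 - α + 2*α : ℝ) = 1 + α by ring, ← hcdef, ← hGdef]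
  set g : ℝ := c ^ α * Real.Gamma c / Real.Gamma (c + α) with hgdef
  set g2 : ℝ := c ^ (2*α) * Real.Gamma c / Real.Gamma (c + 2*α) with hg2def
  set r : ℝ := ((j:ℝ)*α/c) ^ α with hrdef
  have hgB := gamma_ratio_bounds hc hα0 hα1.le
  have hg2B := gamma_ratio2_bounds hc hα0 hα1.le
  have hgGpos : 0 < Real.Gamma c := Real.Gamma_pos_of_pos hc
  have hgGapos : 0 < Real.Gamma (c+α) := Real.Gamma_pos_of_pos (by linarith only [hc, hα0])
  have hgG2apos : 0 < Real.Gamma (c+2*α) := Real.Gamma_pos_of_pos (by linarith only [hc, hα0])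
  have htpos : (0:ℝ) < (j:ℝ)*α/c := by positivity
  have hrpos : 0 < r := Real.rpow_pos_of_pos htpos _
  have hg2pos : 0 < g2 := by rw [hg2def]; positivity
  have hrabs : |r - 1| ≤ |β|/c := by
    have hjαc : (j:ℝ)*α = c - β := by rw [hcβ]; ring
    have h1 : ((j:ℝ)*α/c) - 1 = -β/c := by rw [hjαc]; field_simp; ring
    calc |r - 1| ≤ |((j:ℝ)*α/c) - 1| := rpow_abs_sub_one htpos hα0.le hα1.le
      _ = |β|/c := by rw [h1, abs_div, abs_neg, abs_of_pos hc]
  have hδ : (0:ℝ) ≤ |β|/c := by positivity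
  have hαMay : α/c ≤ α/κ := div_le_div_of_nonneg_left hα0.le hκ hκc
  have hβMay : |β|/c ≤ |β|/κ := div_le_div_of_nonneg_left (abs_nonneg _) hκ hκc
  -- identities
  have hrg : r * g = (j:ℝ)^α * P * (Real.Gamma c / Real.Gamma (c+α)) := by
    rw [hrdef, hgdef, hPdef, Real.div_rpow (by positivity) hc.le,
      Real.mul_rpow (by positivity) hα0.le]
    have hcα : (0:ℝ) < c ^ α := Real.rpow_pos_of_pos hc _
    field_simp
  have hr2 : r^2 = ((j:ℝ)*α/c) ^ (2*α) := (rpow_two_eq htpos.le α).symm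
  have hr2g2 : r^2 * g2 = (j:ℝ)^(2*α) * P2 * (Real.Gamma c / Real.Gamma (c+2*α)) := by
    rw [hr2, hg2def, hP2def, Real.div_rpow (by positivity) hc.le,
      Real.mul_rpow (by positivity) hα0.le, rpow_two_eq (Nat.cast_nonneg j) α,
      rpow_two_eq hα0.le α, rpow_two_eq hc.le α]
    have hcα : (0:ℝ) < c ^ α := Real.rpow_pos_of_pos hc _
    field_simp
  have hEval : ∫ ω, ((j : ℝ) * Y j ω) ^ α ∂ℙ = r * g / (P * G) := by
    rw [hE, hrg]; field_simp
  have hE2val : ∫ ω, ((j : ℝ) * Y j ω) ^ (2*α) ∂ℙ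
      = Real.Gamma (1+α) * (r^2 * g2) / (P2 * G) := by
    rw [hE2, hr2g2]; field_simp
  -- core bounds
  have hcore1 : |r*g - 1| ≤ K0/c := by
    have h := core1 hrabs hgB.1 hgB.2 (by positivity) hαMay hδ
    have heq : K0/c = (|β|/c)*(1+α/κ) + α/c := by
      rw [hK0def]; ring
    calc |r*g-1| ≤ (|β|/c)*(1+α/κ) + α/c := h
      _ = K0/c := heq.symm
  have hcore2 : |r^2*g2 - 1| ≤ K3/c := by
    have h := core2 hrabs hrpos hg2B.1 hg2B.2 hg2pos (by positivity) hαMay hδ hβMay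
    have heq : K3/c = (|β|/c)*(2+|β|/κ)*(1+α/κ)^2 + (2*(α/c) + (α/c)*(α/κ)) := by
      rw [hK3def]; ring
    calc |r^2*g2-1| ≤ (|β|/c)*(2+|β|/κ)*(1+α/κ)^2 + (2*(α/c) + (α/c)*(α/κ)) := h
      _ = K3/c := heq.symm
  -- goal 1
  have hEA : |(∫ ω, ((j : ℝ) * Y j ω) ^ α ∂ℙ) - A| ≤ C1/j := by
    rw [hEval, hAdef, show r*g/(P*G) - 1/(P*G) = (r*g-1)/(P*G) by ring, abs_div,
      abs_of_pos (by positivity : (0:ℝ) < P*G)]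
    have h1 : |r*g-1| ≤ K0/(κ*j) :=
      hcore1.trans (div_le_div_of_nonneg_left hK0 (by positivity) hκj)
    have h2 : C1/(j:ℝ) = (K0/(κ*j))/(P*G) := by rw [hC1def]; ring
    rw [h2]
    gcongr
  -- variance
  have hMem : MeasureTheory.MemLp (fun ω => ((j : ℝ) * Y j ω) ^ α) 2 (ℙ : Measure Ω) :=
    memLp_two (hmeas j) hmap hjpos hα0.le hj1
  have hvar : variance (fun ω => ((j : ℝ) * Y j ω) ^ α) ℙ
      = (∫ ω, ((j : ℝ) * Y j ω) ^ (2*α) ∂ℙ) - (∫ ω, ((j : ℝ) * Y j ω) ^ α ∂ℙ)^2 := by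
    rw [variance_eq_sub hMem]
    congr 1
    have hae := ae_mem_Ioo (hmeas j) hmap
    refine integral_congr_ae (hae.mono fun ω hω => ?_)
    have hx : (0:ℝ) < (j:ℝ) * Y j ω := mul_pos hjpos hω.1
    simp only [Pi.pow_apply]
    rw [rpow_two_eq hx.le α]
  have hT : (Real.Gamma (1 + α) * Real.Gamma (1 - α) - 1) /
      (α ^ (2 * α) * Real.Gamma (1 - α) ^ 2) = B - A^2 := by
    rw [hBdef, hAdef, ← hGdef, ← hP2def, hP2sq]
    field_simp
  have hE2B : |(∫ ω, ((j : ℝ) * Y j ω) ^ (2*α) ∂ℙ) - B| ≤ C2/j := by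
    rw [hE2val, hBdef,
      show Real.Gamma (1+α) * (r^2*g2)/(P2*G) - Real.Gamma (1+α)/(P2*G)
        = (Real.Gamma (1+α)/(P2*G)) * (r^2*g2 - 1) by ring, abs_mul,
      abs_of_pos (by positivity : (0:ℝ) < Real.Gamma (1+α)/(P2*G))]
    have h1 : |r^2*g2-1| ≤ K3/(κ*j) :=
      hcore2.trans (div_le_div_of_nonneg_left hK3 (by positivity) hκj)
    have h2 : C2/(j:ℝ) = (Real.Gamma (1+α)/(P2*G)) * (K3/(κ*j)) := by
      rw [hC2def]; ring
    rw [h2]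
    exact mul_le_mul_of_nonneg_left h1 (by positivity)
  have hC1j : C1/(j:ℝ) ≤ C1 := by
    have := div_le_div_of_nonneg_left hC1 one_pos hj1
    rwa [div_one] at this
  have hsq : |(∫ ω, ((j : ℝ) * Y j ω) ^ α ∂ℙ)^2 - A^2| ≤ C3/j := by
    set E := ∫ ω, ((j : ℝ) * Y j ω) ^ α ∂ℙ with hEdef
    have h1 : E^2 - A^2 = (E - A)*(E + A) := by ring
    rw [h1, abs_mul]
    have hE' : |E| - |A| ≤ |E - A| := abs_sub_abs_le_abs_sub E A
    have h2 : |E + A| ≤ 2*A + C1 := by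
      have h5 := abs_add_le E A
      have h6 : |A| = A := abs_of_pos hA
      have h7 : |E| ≤ A + C1 := by
        rw [h6] at hE'
        linarith only [hE', hEA, hC1j, h6]
      linarith only [h5, h6, h7]
    have h3 : C3/(j:ℝ) = (C1/j)*(2*A+C1) := by rw [hC3def]; ring
    rw [h3]
    exact mul_le_mul hEA h2 (abs_nonneg _) (by positivity)
  constructor
  · exact hEA.trans (by gcongr; exact le_max_left _ _)
  · rw [hvar, hT]
    have heq : (∫ ω, ((j : ℝ) * Y j ω) ^ (2*α) ∂ℙ) - (∫ ω, ((j : ℝ) * Y j ω) ^ α ∂ℙ)^2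
          - (B - A^2)
        = ((∫ ω, ((j : ℝ) * Y j ω) ^ (2*α) ∂ℙ) - B)
          - ((∫ ω, ((j : ℝ) * Y j ω) ^ α ∂ℙ)^2 - A^2) := by ring
    rw [heq]
    calc |((∫ ω, ((j : ℝ) * Y j ω) ^ (2*α) ∂ℙ) - B)
          - ((∫ ω, ((j : ℝ) * Y j ω) ^ α ∂ℙ)^2 - A^2)|
        ≤ C2/j + C3/j := (abs_sub _ _).trans (add_le_add hE2B hsq)
      _ = (C2+C3)/j := by ring
      _ ≤ max C1 (C2+C3)/j := by gcongr; exact le_max_right _ _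
end
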